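/- Let -1 < γ < 0, d ≥ 1, λ > 0, and 0 < B < A. Then there exists a constant C_{γ,λ}, depending only on γ and λ, such that ∫_0^{1/2} s^γ (1-s)^{d-1} / (A - B s)^{d+λ} ds ≤ (C_{γ,λ} / d^λ) · 1 / (B^d (A - B)^λ). -/

import Mathlib

open MeasureTheory Real

lemma amgm_aux {lam d x y : ℝ} (hlam : 0 < lam) (hd : 0 < d) (hx : 0 < x) (hy : 0 < y) :
    d ^ lam / lam ^ lam * (x ^ lam * y ^ d) ≤ (x + y) ^ (d + lam) := by
  have hdl : 0 < d + lam := by linarith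
  set w1 : ℝ := lam / (d + lam) with hw1def
  set w2 : ℝ := d / (d + lam) with hw2def
  have hw1 : 0 < w1 := by positivity
  have hw2 : 0 < w2 := by positivity
  have hsum : w1 + w2 = 1 := by
    rw [hw1def, hw2def, ← add_div, add_comm lam d]; exact div_self hdl.ne'
  have hg := Real.geom_mean_le_arith_mean2_weighted hw1.le hw2.le
      (by positivity : (0:ℝ) ≤ x / w1) (by positivity : (0:ℝ) ≤ y / w2) hsum
  rw [mul_div_cancel₀ _ hw1.ne', mul_div_cancel₀ _ hw2.ne'] at hg
  have hpow := Real.rpow_le_rpow (by positivity) hg hdl.le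
  rw [Real.mul_rpow (by positivity) (by positivity),
      ← Real.rpow_mul (by positivity), ← Real.rpow_mul (by positivity)] at hpow
  have e1 : w1 * (d + lam) = lam := by rw [hw1def, div_mul_cancel₀ _ hdl.ne']
  have e2 : w2 * (d + lam) = d := by rw [hw2def, div_mul_cancel₀ _ hdl.ne']
  rw [e1, e2] at hpow
  refine le_trans ?_ hpow
  rw [Real.div_rpow hx.le hw1.le, Real.div_rpow hy.le hw2.le,
      Real.div_rpow hlam.le hdl.le, Real.div_rpow hd.le hdl.le]
  have hx1 : d ^ lam / lam ^ lam * x ^ lam ≤ x ^ lam / (lam ^ lam / (d + lam) ^ lam) := by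
    rw [div_div_eq_mul_div, div_mul_eq_mul_div, div_le_div_iff₀ (by positivity) (by positivity)]
    have : d ^ lam ≤ (d + lam) ^ lam :=
      Real.rpow_le_rpow hd.le (by linarith) hlam.le
    nlinarith [mul_le_mul_of_nonneg_right this (show (0:ℝ) ≤ x ^ lam * lam ^ lam by positivity)]
  have hy1 : y ^ d ≤ y ^ d / (d ^ d / (d + lam) ^ d) := by
    rw [le_div_iff₀ (by positivity)]
    have : d ^ d ≤ (d + lam) ^ d := Real.rpow_le_rpow hd.le (by linarith) hd.le
    calc y ^ d * (d ^ d / (d + lam) ^ d) ≤ y ^ d * 1 := by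
          apply mul_le_mul_of_nonneg_left _ (by positivity)
          rw [div_le_one (by positivity)]; exact this
      _ = y ^ d := mul_one _
  calc d ^ lam / lam ^ lam * (x ^ lam * y ^ d)
      = (d ^ lam / lam ^ lam * x ^ lam) * y ^ d := by ring
    _ ≤ (x ^ lam / (lam ^ lam / (d + lam) ^ lam)) * (y ^ d / (d ^ d / (d + lam) ^ d)) :=
        mul_le_mul hx1 hy1 (by positivity) (by positivity)

/-- Estimate near the origin for `-1 < γ < 0`: for `d ≥ 1`, `λ > 0`, and `0 < B < A`,
`∫_0^{1/2} s^γ (1-s)^{d-1}/(A-Bs)^{d+λ} ds ≤ (C_{γ,λ}/d^λ) B^{-d} (A-B)^{-λ}`. -/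
theorem integral_near_origin_estimate (γ lam : ℝ) (hγ : -1 < γ) (hγ0 : γ < 0)
    (hlam : 0 < lam) :
    ∃ C : ℝ, ∀ d A B : ℝ, 1 ≤ d → 0 < B → B < A →
      (∫ s in Set.Ioo (0 : ℝ) (1 / 2),
          s ^ γ * (1 - s) ^ (d - 1) / (A - B * s) ^ (d + lam)) ≤
        C / d ^ lam * (1 / (B ^ d * (A - B) ^ lam)) := by
  have hγ1 : 0 < γ + 1 := by linarith
  refine ⟨2 * lam ^ lam * ((1/2 : ℝ) ^ (γ + 1) / (γ + 1)), ?_⟩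
  intro d A B hd hB hBA
  have hd0 : 0 < d := by linarith
  have hAB : 0 < A - B := by linarith
  set K : ℝ := 2 * lam ^ lam / (d ^ lam * (B ^ d * (A - B) ^ lam)) with hK
  have hKpos : 0 < K := by positivity
  have key : ∀ s ∈ Set.Ioo (0:ℝ) (1/2),
      s ^ γ * (1 - s) ^ (d - 1) / (A - B * s) ^ (d + lam) ≤ K * s ^ γ := by
    intro s hs
    obtain ⟨hs0, hs2⟩ := hs
    have ht0 : 0 < 1 - s := by linarith
    have ht2 : (1:ℝ)/2 ≤ 1 - s := by linarith
    have hy : 0 < B * (1 - s) := by positivity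
    have hamgm := amgm_aux hlam hd0 hAB hy
    have hsplit : A - B * s = (A - B) + B * (1 - s) := by ring
    have hlow : d ^ lam / lam ^ lam * ((A - B) ^ lam * (B * (1 - s)) ^ d)
        ≤ (A - B * s) ^ (d + lam) := by rw [hsplit]; exact hamgm
    have hABs : 0 < A - B * s := by nlinarith
    -- divide
    have hden : 0 < d ^ lam / lam ^ lam * ((A - B) ^ lam * (B * (1 - s)) ^ d) := by
      positivity
    have hnum : 0 ≤ s ^ γ * (1 - s) ^ (d - 1) := by positivity
    have step1 : s ^ γ * (1 - s) ^ (d - 1) / (A - B * s) ^ (d + lam)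
        ≤ s ^ γ * (1 - s) ^ (d - 1) /
          (d ^ lam / lam ^ lam * ((A - B) ^ lam * (B * (1 - s)) ^ d)) :=
      div_le_div_of_nonneg_left hnum hden hlow
    refine step1.trans ?_
    rw [Real.mul_rpow hB.le ht0.le]
    have hpow : (1 - s) ^ (d - 1) = (1 - s) ^ d * (1 - s)⁻¹ := by
      rw [Real.rpow_sub ht0, Real.rpow_one]
      rfl
    rw [hpow]
    have hinv : (1 - s)⁻¹ ≤ 2 := by
      rw [inv_le_comm₀ (by linarith) (by norm_num)]
      linarith
    have hrw : s ^ γ * ((1 - s) ^ d * (1 - s)⁻¹) /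
          (d ^ lam / lam ^ lam * ((A - B) ^ lam * (B ^ d * (1 - s) ^ d)))
        = (1 - s)⁻¹ * lam ^ lam / (d ^ lam * (B ^ d * (A - B) ^ lam)) * s ^ γ := by
      have h1 : (0:ℝ) < (1 - s) ^ d := by positivity
      field_simp
    rw [hrw, hK]
    apply mul_le_mul_of_nonneg_right _ (by positivity)
    rw [div_le_div_iff₀ (by positivity) (by positivity)]
    have : (1 - s)⁻¹ * lam ^ lam ≤ 2 * lam ^ lam :=
      mul_le_mul_of_nonneg_right hinv (by positivity)
    nlinarith [this, (show (0:ℝ) < d ^ lam * (B ^ d * (A - B) ^ lam) by positivity)]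
  have hint : IntegrableOn (fun s : ℝ => K * s ^ γ) (Set.Ioo 0 (1/2)) := by
    apply Integrable.const_mul
    have : IntervalIntegrable (fun s : ℝ => s ^ γ) volume 0 (1/2) :=
      intervalIntegral.intervalIntegrable_rpow' hγ
    have h2 := (intervalIntegrable_iff_integrableOn_Ioc_of_le (by norm_num)).mp this
    exact h2.mono_set Set.Ioo_subset_Ioc_self
  have h1 : (∫ s in Set.Ioo (0:ℝ) (1/2),
        s ^ γ * (1 - s) ^ (d - 1) / (A - B * s) ^ (d + lam))
      ≤ ∫ s in Set.Ioo (0:ℝ) (1/2), K * s ^ γ := by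
    apply integral_mono_of_nonneg
    · filter_upwards [ae_restrict_mem measurableSet_Ioo] with s hs
      obtain ⟨hs0, hs2⟩ := hs
      have h1s : 0 < 1 - s := by linarith
      have : 0 < A - B * s := by nlinarith
      positivity
    · exact hint
    · filter_upwards [ae_restrict_mem measurableSet_Ioo] with s hs
      exact key s hs
  have h2 : (∫ s in Set.Ioo (0:ℝ) (1/2), K * s ^ γ)
      = K * ((1/2 : ℝ) ^ (γ + 1) / (γ + 1)) := by
    rw [integral_const_mul]
    congr 1
    rw [← integral_Ioc_eq_integral_Ioo,
        ← intervalIntegral.integral_of_le (by norm_num : (0:ℝ) ≤ 1/2)]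
    rw [integral_rpow (Or.inl hγ)]
    rw [Real.zero_rpow (by linarith : γ + 1 ≠ 0)]
    ring
  refine h1.trans ?_
  rw [h2, hK]
  apply le_of_eq
  field_simp
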